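/- arXiv:1405.2731 — 8 statements merged into one kernel-verified Lean document; each statement's English description precedes it below -/
import Mathlib

section
/- If p > 1 and (a_k) is a sequence of nonnegative real numbers with ∑ a_n^p < ∞, then ∑_{n=1}^∞ ((1/n) ∑_{k=1}^n a_k)^p ≤ (p/(p-1))^p ∑_{n=1}^∞ a_n^p. -/
open Finset

/-- Pointwise key estimate in the proof of Hardy's inequality. -/
lemma hardy_pointwise (p : ℝ) (hp : 1 < p) {x y m : ℝ} (hx : 0 ≤ x) (hy : 0 ≤ y)
    (hm : 0 ≤ m) :
    (p - 1) * y ^ p ≤ p * (((m + 1) * y - m * x) * y ^ (p - 1)) + (m * x ^ p - (m + 1) * y ^ p) := by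
  have hpq : p.HolderConjugate (p / (p - 1)) := .conjExponent hp
  set q : ℝ := p / (p - 1)
  have hp0 : (0:ℝ) < p := hpq.pos
  have yyp : y ^ p = y * y ^ (p - 1) := by
    have h1 : (1:ℝ) + (p - 1) = p := by ring
    have h2 := Real.rpow_add' hy (show (1:ℝ) + (p - 1) ≠ 0 by rw [h1]; exact ne_of_gt hp0)
    rw [h1, Real.rpow_one] at h2
    exact h2
  have yq : (y ^ (p - 1)) ^ q = y ^ p := by
    rw [← Real.rpow_mul hy, hpq.sub_one_mul_conj]
  have young := Real.young_inequality_of_nonneg hx (Real.rpow_nonneg hy (p - 1)) hpq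
  rw [yq] at young
  have key2 : p * m * (x * y ^ (p - 1)) ≤ m * x ^ p + (p - 1) * m * y ^ p := by
    have h1 : p * m * (x * y ^ (p - 1)) ≤ p * m * (x ^ p / p + y ^ p / q) :=
      mul_le_mul_of_nonneg_left young (by positivity)
    have h2 : p * m * (x ^ p / p + y ^ p / q) = m * x ^ p + (p / q) * m * y ^ p := by
      field_simp
    rw [h2, hpq.div_conj_eq_sub_one] at h1
    exact h1
  have expand : ((m + 1) * y - m * x) * y ^ (p - 1)
      = (m + 1) * (y * y ^ (p - 1)) - m * (x * y ^ (p - 1)) := by ring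
  rw [expand, ← yyp]
  nlinarith [key2]

/-- Discrete Hardy inequality: for `p > 1` and a nonnegative sequence `a`
(indexed here from `0`, with `a n` standing for `a_{n+1}`) with `∑ aₙ^p < ∞`,
the Cesàro averages satisfy
`∑ₙ ((1/n) ∑_{k=1}^n a_k)^p ≤ (p/(p-1))^p ∑ₙ aₙ^p`. -/
theorem discrete_hardy_inequality (p : ℝ) (hp : 1 < p) (a : ℕ → ℝ)
    (ha : ∀ n, 0 ≤ a n) (hsum : Summable fun n => a n ^ p) :
    Summable (fun n : ℕ =>
      ((∑ k ∈ Finset.range (n + 1), a k) / (n + 1 : ℝ)) ^ p) ∧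
    (∑' n : ℕ, ((∑ k ∈ Finset.range (n + 1), a k) / (n + 1 : ℝ)) ^ p)
      ≤ (p / (p - 1)) ^ p * ∑' n : ℕ, a n ^ p := by
  have hpq : p.HolderConjugate (p / (p - 1)) := .conjExponent hp
  set q : ℝ := p / (p - 1) with hqdef
  have hp0 : (0:ℝ) < p := hpq.pos
  have hp1 : (0:ℝ) < p - 1 := hpq.sub_one_pos
  have hq0 : (0:ℝ) < q := hpq.symm.pos
  set A : ℕ → ℝ := fun n => (∑ k ∈ Finset.range (n + 1), a k) / (n + 1 : ℝ) with hAdef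
  have hA0 : ∀ n, 0 ≤ A n := fun n =>
    div_nonneg (Finset.sum_nonneg fun k _ => ha k) (by positivity)
  have hSA : ∀ n : ℕ, (n + 1 : ℝ) * A n = ∑ k ∈ Finset.range (n + 1), a k := fun n => by
    rw [hAdef]
    field_simp
  have hSA' : ∀ n : ℕ, (n : ℝ) * A (n - 1) = ∑ k ∈ Finset.range n, a k := by
    intro n
    cases n with
    | zero => simp
    | succ m =>
        have := hSA m
        push_cast
        simpa using this
  -- the telescoping sequence
  set B : ℕ → ℝ := fun n => (n : ℝ) * A (n - 1) ^ p with hBdef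
  have hB0 : ∀ n, 0 ≤ B n := fun n => mul_nonneg (by positivity) (Real.rpow_nonneg (hA0 _) p)
  have key : ∀ n : ℕ, (p - 1) * A n ^ p
      ≤ p * (a n * A n ^ (p - 1)) + (B n - B (n + 1)) := by
    intro n
    have han : a n = ((n : ℝ) + 1) * A n - (n : ℝ) * A (n - 1) := by
      rw [hSA n, hSA' n, Finset.sum_range_succ]
      ring
    have hBn : B n = (n : ℝ) * A (n - 1) ^ p := rfl
    have hBn1 : B (n + 1) = ((n : ℝ) + 1) * A n ^ p := by
      rw [hBdef]
      push_cast
      simp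
    rw [han, hBn, hBn1]
    exact hardy_pointwise p hp (hA0 _) (hA0 _) (Nat.cast_nonneg n)
  -- summed version
  have sumkey : ∀ N : ℕ, (p - 1) * ∑ n ∈ Finset.range N, A n ^ p
      ≤ p * ∑ n ∈ Finset.range N, a n * A n ^ (p - 1) := by
    intro N
    have h1 : ∑ n ∈ Finset.range N, (p - 1) * A n ^ p
        ≤ ∑ n ∈ Finset.range N, (p * (a n * A n ^ (p - 1)) + (B n - B (n + 1))) :=
      Finset.sum_le_sum fun n _ => key n
    rw [Finset.sum_add_distrib, Finset.sum_range_sub' B N] at h1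
    have hB : B 0 - B N ≤ 0 := by
      have h := hB0 N
      have hB00 : B 0 = 0 := by simp [hBdef]
      linarith
    calc (p - 1) * ∑ n ∈ Finset.range N, A n ^ p
        = ∑ n ∈ Finset.range N, (p - 1) * A n ^ p := by rw [Finset.mul_sum]
      _ ≤ ∑ n ∈ Finset.range N, p * (a n * A n ^ (p - 1)) + (B 0 - B N) := h1
      _ ≤ ∑ n ∈ Finset.range N, p * (a n * A n ^ (p - 1)) := by linarith
      _ = p * ∑ n ∈ Finset.range N, a n * A n ^ (p - 1) := by rw [Finset.mul_sum]
  set S : ℝ := ∑' n, a n ^ p with hSdef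
  have hS0 : 0 ≤ S := tsum_nonneg fun n => Real.rpow_nonneg (ha n) p
  have hpartial : ∀ N : ℕ, ∑ n ∈ Finset.range N, a n ^ p ≤ S := fun N =>
    hsum.sum_le_tsum _ (fun n _ => Real.rpow_nonneg (ha n) p)
  -- uniform bound on partial sums of A n ^ p
  have bound : ∀ N : ℕ, ∑ n ∈ Finset.range N, A n ^ p ≤ q ^ p * S := by
    intro N
    set T : ℝ := ∑ n ∈ Finset.range N, A n ^ p with hTdef
    have hT0 : 0 ≤ T := Finset.sum_nonneg fun n _ => Real.rpow_nonneg (hA0 n) p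
    have hq_nonneg : (0:ℝ) ≤ q ^ p * S := by positivity
    rcases eq_or_lt_of_le hT0 with hT | hT
    · linarith
    -- Hölder
    have holder : ∑ n ∈ Finset.range N, a n * A n ^ (p - 1)
        ≤ (∑ n ∈ Finset.range N, a n ^ p) ^ (1 / p)
          * (∑ n ∈ Finset.range N, (A n ^ (p - 1)) ^ q) ^ (1 / q) :=
      Real.inner_le_Lp_mul_Lq_of_nonneg _ hpq (fun i _ => ha i)
        (fun i _ => Real.rpow_nonneg (hA0 i) _)
    have hAq : ∀ n : ℕ, (A n ^ (p - 1)) ^ q = A n ^ p := fun n => by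
      rw [← Real.rpow_mul (hA0 n), hpq.sub_one_mul_conj]
    simp only [hAq] at holder
    set X : ℝ := (∑ n ∈ Finset.range N, a n ^ p) ^ (1 / p) * T ^ (1 / q) with hXdef
    have h2 : T ≤ q * X := by
      have h3 : (p - 1) * T ≤ p * X :=
        le_trans (sumkey N) (mul_le_mul_of_nonneg_left holder hp0.le)
      rw [hqdef, div_mul_eq_mul_div, le_div_iff₀ hp1]
      linarith
    have h4 : (∑ n ∈ Finset.range N, a n ^ p) ^ (1 / p) ≤ S ^ (1 / p) :=
      Real.rpow_le_rpow (Finset.sum_nonneg fun n _ => Real.rpow_nonneg (ha n) p)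
        (hpartial N) (by positivity)
    have h5 : T ≤ q * (S ^ (1 / p) * T ^ (1 / q)) := by
      refine le_trans h2 (mul_le_mul_of_nonneg_left ?_ hq0.le)
      exact mul_le_mul_of_nonneg_right h4 (Real.rpow_nonneg hT0 _)
    have hTsplit : T ^ (1 / p) * T ^ (1 / q) = T := by
      rw [← Real.rpow_add hT, one_div, one_div, hpq.inv_add_inv_eq_one, Real.rpow_one]
    have hTq : (0:ℝ) < T ^ (1 / q) := Real.rpow_pos_of_pos hT _
    have h6 : T ^ (1 / p) ≤ q * S ^ (1 / p) := by
      refine le_of_mul_le_mul_right ?_ hTq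
      rw [hTsplit, mul_assoc]
      exact h5
    have h7 : (T ^ (1 / p)) ^ p ≤ (q * S ^ (1 / p)) ^ p :=
      Real.rpow_le_rpow (Real.rpow_nonneg hT0 _) h6 hp0.le
    calc T = (T ^ (1 / p)) ^ p := by
            rw [← Real.rpow_mul hT0, one_div_mul_cancel hp0.ne', Real.rpow_one]
      _ ≤ (q * S ^ (1 / p)) ^ p := h7
      _ = q ^ p * S := by
            rw [Real.mul_rpow hq0.le (Real.rpow_nonneg hS0 _), ← Real.rpow_mul hS0,
              one_div_mul_cancel hp0.ne', Real.rpow_one]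
  have hsummA : Summable (fun n : ℕ => A n ^ p) :=
    summable_of_sum_range_le (fun n => Real.rpow_nonneg (hA0 n) p) bound
  have htsum : (∑' n, A n ^ p) ≤ q ^ p * S :=
    Real.tsum_le_of_sum_range_le (fun n => Real.rpow_nonneg (hA0 n) p) bound
  exact ⟨hsummA, htsum⟩
end

section
/- If (a_n) is a nonnegative real sequence in ℓ², then the sequence of Cesàro averages ((1/n) ∑_{k=1}^n a_k)_{n≥1} is also in ℓ², and its ℓ² norm is at most 2 times the ℓ² norm of (a_n). -/
open Finset

/-- Hardy inequality for `p = 2`: if a nonnegative sequence is in `ℓ²`, so is the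
sequence of its Cesàro averages, with `ℓ²` norm at most twice as large. -/
theorem hardy_p_two (a : ℕ → ℝ) (ha : ∀ n, 0 ≤ a n)
    (hsum : Summable fun n => a n ^ 2) :
    Summable (fun n : ℕ =>
      ((∑ k ∈ Finset.range (n + 1), a k) / (n + 1 : ℝ)) ^ 2) ∧
    Real.sqrt (∑' n : ℕ, ((∑ k ∈ Finset.range (n + 1), a k) / (n + 1 : ℝ)) ^ 2)
      ≤ 2 * Real.sqrt (∑' n : ℕ, a n ^ 2) := by
  set A : ℕ → ℝ := fun n => (∑ k ∈ Finset.range (n + 1), a k) / (n + 1 : ℝ) with hA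
  have hApos : ∀ n : ℕ, (0:ℝ) < (n:ℝ) + 1 := fun n => by positivity
  have hA0 : ∀ n, 0 ≤ A n := fun n => by
    apply div_nonneg (Finset.sum_nonneg fun i _ => ha i) (hApos n).le
  have hAS : ∀ n, A n * ((n:ℝ) + 1) = ∑ k ∈ Finset.range (n + 1), a k := fun n =>
    div_mul_cancel₀ _ (hApos n).ne'
  -- telescoping key inequality
  have key : ∀ N, ∑ n ∈ range (N + 1), A n ^ 2 + ((N:ℝ) + 1) * A N ^ 2
      ≤ 2 * ∑ n ∈ range (N + 1), A n * a n := by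
    intro N
    induction N with
    | zero =>
      have h0 : A 0 = a 0 := by simpa using hAS 0
      norm_num [Finset.sum_range_one]
      rw [h0]; nlinarith [sq_nonneg (a 0)]
    | succ N ih =>
      rw [Finset.sum_range_succ (f := fun n => A n ^ 2),
        Finset.sum_range_succ (f := fun n => A n * a n)]
      have h1 := hAS N
      have h2 := hAS (N + 1)
      have h3 : (∑ k ∈ Finset.range (N + 1 + 1), a k)
          = (∑ k ∈ Finset.range (N + 1), a k) + a (N + 1) := Finset.sum_range_succ a (N + 1)
      push_cast at h1 h2 ⊢
      have ha1 : a (N + 1) = ((N:ℝ) + 2) * A (N + 1) - ((N:ℝ) + 1) * A N := by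
        linarith
      rw [ha1]
      nlinarith [mul_nonneg (by positivity : (0:ℝ) ≤ (N:ℝ) + 1)
        (sq_nonneg (A (N + 1) - A N)), ih]
  have keyfin : ∀ N, ∑ n ∈ range N, A n ^ 2 ≤ 2 * ∑ n ∈ range N, A n * a n := by
    intro N
    cases N with
    | zero => simp
    | succ N =>
      have := key N
      nlinarith [mul_nonneg (by positivity : (0:ℝ) ≤ (N:ℝ) + 1) (sq_nonneg (A N))]
  have bound : ∀ N, ∑ n ∈ range N, A n ^ 2 ≤ 4 * ∑' n, a n ^ 2 := by
    intro N
    set S := ∑ n ∈ range N, A n ^ 2 with hS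
    set T := ∑ n ∈ range N, a n ^ 2 with hT
    set P := ∑ n ∈ range N, A n * a n with hP
    have hS0 : 0 ≤ S := Finset.sum_nonneg fun i _ => sq_nonneg _
    have hT0 : 0 ≤ T := Finset.sum_nonneg fun i _ => sq_nonneg _
    have hP0 : 0 ≤ P := Finset.sum_nonneg fun i _ => mul_nonneg (hA0 i) (ha i)
    have hcs : P ^ 2 ≤ S * T := Finset.sum_mul_sq_le_sq_mul_sq _ _ _
    have hSP : S ≤ 2 * P := keyfin N
    have hS4T : S ≤ 4 * T := by nlinarith
    have hTt : T ≤ ∑' n, a n ^ 2 := Summable.sum_le_tsum (range N) (fun i _ => sq_nonneg _) hsum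
    linarith
  have hsummA : Summable (fun n : ℕ => A n ^ 2) :=
    summable_of_sum_range_le (fun n => sq_nonneg _) bound
  have htsum : (∑' n, A n ^ 2) ≤ 4 * ∑' n, a n ^ 2 :=
    Real.tsum_le_of_sum_range_le (fun n => sq_nonneg _) bound
  refine ⟨hsummA, ?_⟩
  have h4 : (4 : ℝ) * ∑' n, a n ^ 2 = (2 * Real.sqrt (∑' n, a n ^ 2)) ^ 2 := by
    rw [mul_pow, Real.sq_sqrt (tsum_nonneg fun n => sq_nonneg _)]
    ring
  calc Real.sqrt (∑' n, A n ^ 2) ≤ Real.sqrt ((2 * Real.sqrt (∑' n, a n ^ 2)) ^ 2) := by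
        apply Real.sqrt_le_sqrt; rw [← h4]; exact htsum
    _ = 2 * Real.sqrt (∑' n, a n ^ 2) := Real.sqrt_sq (by positivity)
end

section
/- For every real t and every complex sequence (c_n) with c_0 = 0 whose difference sequence (c_n − c_{n−1}) is in ℓ², the sequence (e^{it log n} c_n − e^{it log(n−1)} c_{n−1})_{n≥1} (with the convention e^{it log 0}c_0 = 0) is in ℓ², and there is a constant C (depending only on t) with ∑_n |e^{it log n} c_n − e^{it log(n−1)} c_{n−1}|² ≤ C ∑_n |c_n − c_{n−1}|². -/
open Complex Finset

lemma exp_I_mul_sub_one_norm (x : ℝ) : ‖Complex.exp (Complex.I * x) - 1‖ ≤ |x| := by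
  have h2 : Complex.exp (Complex.I * x) - 1
      = ((Real.cos x - 1 : ℝ) : ℂ) + (Real.sin x : ℝ) * Complex.I := by
    rw [mul_comm, Complex.exp_mul_I]
    push_cast
    ring
  rw [h2, Complex.norm_add_mul_I]
  have hc := Real.one_sub_sq_div_two_le_cos (x := x)
  have hs := Real.sin_sq_add_cos_sq x
  have key : (Real.cos x - 1)^2 + (Real.sin x)^2 ≤ x^2 := by nlinarith [Real.cos_le_one x]
  calc Real.sqrt ((Real.cos x - 1)^2 + (Real.sin x)^2) ≤ Real.sqrt (x^2) :=
        Real.sqrt_le_sqrt key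
    _ = |x| := Real.sqrt_sq_eq_abs x

lemma exp_I_diff_norm (a b : ℝ) :
    ‖Complex.exp (Complex.I * a) - Complex.exp (Complex.I * b)‖ ≤ |a - b| := by
  have h : Complex.exp (Complex.I * a) - Complex.exp (Complex.I * b)
      = Complex.exp (Complex.I * b) * (Complex.exp (Complex.I * (a - b : ℝ)) - 1) := by
    rw [mul_sub, mul_one, ← Complex.exp_add]
    push_cast
    ring_nf
  have hb : ‖Complex.exp (Complex.I * b)‖ = 1 := by
    rw [Complex.norm_exp]
    simp
  rw [h, norm_mul, hb, one_mul]
  exact exp_I_mul_sub_one_norm (a - b)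

lemma hardy_step (a : ℕ → ℝ) (ha : ∀ n, 0 ≤ a n) (N : ℕ) :
    ∑ n ∈ range N, ((∑ k ∈ range (n+1), a k) / (n+1))^2
      + (∑ k ∈ range N, a k)^2 / N
    ≤ 2 * ∑ n ∈ range N, ((∑ k ∈ range (n+1), a k) / (n+1)) * a n := by
  induction N with
  | zero => simp
  | succ N ih =>
    rw [Finset.sum_range_succ (fun n => ((∑ k ∈ range (n+1), a k) / ((n:ℝ)+1))^2) N,
      Finset.sum_range_succ (fun n => ((∑ k ∈ range (n+1), a k) / ((n:ℝ)+1)) * a n) N]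
    have hA : ∑ k ∈ range (N+1), a k = (∑ k ∈ range N, a k) + a N :=
      Finset.sum_range_succ a N
    rw [hA]
    set B : ℝ := ∑ k ∈ range N, a k with hB
    have hB0 : 0 ≤ B := Finset.sum_nonneg fun i _ => ha i
    have haN : 0 ≤ a N := ha N
    have key : ((B + a N) / (N+1))^2 + (B + a N)^2 / (N+1)
        ≤ B^2 / N + 2 * ((B + a N) / (N+1)) * a N := by
      rcases Nat.eq_zero_or_pos N with h0 | hpos
      · subst h0
        simp only [Nat.cast_zero, zero_add, div_one]
        have : B = 0 := by
          simp [hB]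
        rw [this]
        norm_num
        ring_nf
        simp [le_refl]
      · have hN : (0:ℝ) < N := by exact_mod_cast hpos
        have hN1 : (0:ℝ) < (N:ℝ) + 1 := by linarith
        have expand : B^2 / N + 2 * ((B + a N) / ((N:ℝ)+1)) * a N
            - ((B + a N) / ((N:ℝ)+1))^2 - (B + a N)^2 / ((N:ℝ)+1)
            = (((N:ℝ) * (B + a N) - ((N:ℝ)+1) * B)^2) / ((N:ℝ) * ((N:ℝ)+1)^2) := by
          field_simp
          ring
        have hnn : (0:ℝ) ≤ (((N:ℝ) * (B + a N) - ((N:ℝ)+1) * B)^2) / ((N:ℝ) * ((N:ℝ)+1)^2) :=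
          div_nonneg (sq_nonneg _) (by positivity)
        linarith [expand ▸ hnn]
    push_cast
    push_cast at ih key
    linarith [ih, key]

lemma hardy (a : ℕ → ℝ) (ha : ∀ n, 0 ≤ a n) (N : ℕ) :
    ∑ n ∈ range N, ((∑ k ∈ range (n+1), a k) / (n+1))^2
      ≤ 4 * ∑ n ∈ range N, (a n)^2 := by
  set α : ℕ → ℝ := fun n => (∑ k ∈ range (n+1), a k) / (n+1) with hα
  have hα0 : ∀ n, 0 ≤ α n := fun n => by
    apply div_nonneg (Finset.sum_nonneg fun i _ => ha i) (by positivity)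
  set S := ∑ n ∈ range N, (α n)^2 with hS
  set T := ∑ n ∈ range N, α n * a n with hT
  set T' := ∑ n ∈ range N, (a n)^2 with hT'
  have hS0 : 0 ≤ S := Finset.sum_nonneg fun i _ => sq_nonneg _
  have hT0 : 0 ≤ T := Finset.sum_nonneg fun i _ => mul_nonneg (hα0 i) (ha i)
  have hT'0 : 0 ≤ T' := Finset.sum_nonneg fun i _ => sq_nonneg _
  have h1 : S ≤ 2 * T := by
    have := hardy_step a ha N
    have hq : 0 ≤ (∑ k ∈ range N, a k)^2 / N := by positivity
    change S + (∑ k ∈ range N, a k)^2 / N ≤ 2 * T at this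
    linarith
  have h2 : T^2 ≤ S * T' := Finset.sum_mul_sq_le_sq_mul_sq (range N) α a
  rcases eq_or_lt_of_le hT0 with h | h
  · linarith
  · nlinarith

/-- Multiplication by `(e^{it log n})` is bounded on `ℓ²(Δ)`: for every `t` there
is a constant `C` such that for every sequence `c` (indexed from `1`, with
`c 0 = 0`, and the convention `e^{it log 0} c 0 = 0`) whose first differences are
square-summable, the first differences of `(e^{it log n} c_n)` are also
square-summable with `∑ |e^{it log n} cₙ - e^{it log (n-1)} c_{n-1}|² ≤ C ∑ |cₙ - c_{n-1}|²`. -/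
theorem mult_by_eitlogn_bounded_on_l2Delta (t : ℝ) :
    ∃ C : ℝ, ∀ c : ℕ → ℂ, c 0 = 0 →
      Summable (fun n : ℕ => ‖c (n + 1) - c n‖ ^ 2) →
      Summable (fun n : ℕ =>
        ‖Complex.exp (Complex.I * t * Real.log (n + 1)) * c (n + 1) -
          Complex.exp (Complex.I * t * Real.log n) * c n‖ ^ 2) ∧
      (∑' n : ℕ,
        ‖Complex.exp (Complex.I * t * Real.log (n + 1)) * c (n + 1) -
          Complex.exp (Complex.I * t * Real.log n) * c n‖ ^ 2)
        ≤ C * ∑' n : ℕ, ‖c (n + 1) - c n‖ ^ 2 := by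
  refine ⟨2 + 8 * t^2, fun c hc0 hsum => ?_⟩
  set a : ℕ → ℝ := fun n => ‖c (n + 1) - c n‖ with ha
  have ha0 : ∀ n, 0 ≤ a n := fun n => norm_nonneg _
  set E : ℕ → ℂ := fun n => Complex.exp (Complex.I * t * Real.log n) with hE
  have hEnorm : ∀ n : ℕ, ‖E n‖ = 1 := by
    intro n
    rw [hE, Complex.norm_exp]
    have : (Complex.I * (t:ℂ) * ((Real.log n : ℝ) : ℂ)).re = 0 := by
      simp only [Complex.mul_re, Complex.mul_im, Complex.I_re, Complex.I_im,
        Complex.ofReal_re, Complex.ofReal_im]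
      ring
    rw [this, Real.exp_zero]
  set D : ℕ → ℝ := fun n => ‖E (n+1) * c (n+1) - E n * c n‖ with hD
  -- bound ‖c (m+1)‖ by partial sums of a
  have hcbound : ∀ m : ℕ, ‖c (m+1)‖ ≤ ∑ k ∈ range (m+1), a k := by
    intro m
    have htel : ∑ k ∈ range (m+1), (c (k+1) - c k) = c (m+1) := by
      rw [Finset.sum_range_sub c (m+1), hc0, sub_zero]
    calc ‖c (m+1)‖ = ‖∑ k ∈ range (m+1), (c (k+1) - c k)‖ := by rw [htel]
      _ ≤ ∑ k ∈ range (m+1), ‖c (k+1) - c k‖ := norm_sum_le _ _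
  -- bound on E differences
  have hEdiff : ∀ m : ℕ, ‖E (m+2) - E (m+1)‖ ≤ |t| * (1 / (m+1)) := by
    intro m
    have h1 : E (m+2) = Complex.exp (Complex.I * ((t * Real.log (m+2) : ℝ) : ℂ)) := by
      rw [hE]; push_cast; ring_nf
    have h2 : E (m+1) = Complex.exp (Complex.I * ((t * Real.log (m+1) : ℝ) : ℂ)) := by
      rw [hE]; push_cast; ring_nf
    rw [h1, h2]
    refine le_trans (exp_I_diff_norm _ _) ?_
    rw [← mul_sub, abs_mul]
    gcongr
    have hm1 : (0:ℝ) < (m:ℝ) + 1 := by positivity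
    have hm2 : (0:ℝ) < (m:ℝ) + 2 := by positivity
    have hlog : Real.log ((m:ℝ)+2) - Real.log ((m:ℝ)+1) ≤ 1 / ((m:ℝ)+1) := by
      rw [← Real.log_div (ne_of_gt hm2) (ne_of_gt hm1)]
      have := Real.log_le_sub_one_of_pos (x := ((m:ℝ)+2)/((m:ℝ)+1)) (by positivity)
      calc Real.log (((m:ℝ)+2)/((m:ℝ)+1)) ≤ ((m:ℝ)+2)/((m:ℝ)+1) - 1 := this
        _ = 1 / ((m:ℝ)+1) := by field_simp; norm_num
    have hlog0 : Real.log ((m:ℝ)+1) ≤ Real.log ((m:ℝ)+2) := by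
      apply Real.log_le_log (by positivity); linarith
    push_cast
    rw [_root_.abs_of_nonneg (sub_nonneg.2 hlog0)]
    exact hlog
  -- pointwise bound
  have hpt : ∀ n : ℕ, (D n)^2 ≤ 2 * (a n)^2 + 2 * ‖(E (n+1) - E n) * c n‖^2 := by
    intro n
    have hsplit : E (n+1) * c (n+1) - E n * c n
        = E (n+1) * (c (n+1) - c n) + (E (n+1) - E n) * c n := by ring
    have h1 : ‖E (n+1) * (c (n+1) - c n)‖ = a n := by
      rw [norm_mul, hEnorm, one_mul]
    have htri := norm_add_le (E (n+1) * (c (n+1) - c n)) ((E (n+1) - E n) * c n)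
    rw [h1] at htri
    have hD' : D n ≤ a n + ‖(E (n+1) - E n) * c n‖ := by
      calc D n = ‖E (n+1) * c (n+1) - E n * c n‖ := rfl
        _ = ‖E (n+1) * (c (n+1) - c n) + (E (n+1) - E n) * c n‖ := by rw [hsplit]
        _ ≤ a n + ‖(E (n+1) - E n) * c n‖ := htri
    have hDnn : (0:ℝ) ≤ D n := norm_nonneg _
    nlinarith [hD', hDnn, norm_nonneg ((E (n+1) - E n) * c n), ha0 n,
      sq_nonneg (a n - ‖(E (n+1) - E n) * c n‖)]
  -- the g-sum bound
  set T' := ∑' n, (a n)^2 with hT'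
  have hsum' : Summable (fun n => (a n)^2) := hsum
  have hle_tsum : ∀ N : ℕ, ∑ n ∈ range N, (a n)^2 ≤ T' := fun N =>
    Summable.sum_le_tsum (range N) (fun i _ => sq_nonneg _) hsum'
  have hg : ∀ m : ℕ, ‖(E (m+2) - E (m+1)) * c (m+1)‖^2
      ≤ t^2 * ((∑ k ∈ range (m+1), a k) / (m+1))^2 := by
    intro m
    have h1 : ‖(E (m+2) - E (m+1)) * c (m+1)‖
        ≤ (|t| * (1 / (m+1))) * (∑ k ∈ range (m+1), a k) := by
      rw [norm_mul]
      exact mul_le_mul (hEdiff m) (hcbound m) (norm_nonneg _)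
        (by positivity)
    have h2 : (|t| * (1 / ((m:ℝ)+1))) * (∑ k ∈ range (m+1), a k)
        = |t| * ((∑ k ∈ range (m+1), a k) / ((m:ℝ)+1)) := by ring
    have h0 : (0:ℝ) ≤ ‖(E (m+2) - E (m+1)) * c (m+1)‖ := norm_nonneg _
    have h3 := h1
    rw [h2] at h3
    calc ‖(E (m+2) - E (m+1)) * c (m+1)‖^2
        ≤ (|t| * ((∑ k ∈ range (m+1), a k) / ((m:ℝ)+1)))^2 :=
          pow_le_pow_left₀ h0 h3 2
      _ = t^2 * ((∑ k ∈ range (m+1), a k) / ((m:ℝ)+1))^2 := by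
          rw [mul_pow, _root_.sq_abs]
  have hgsum : ∀ N : ℕ, ∑ n ∈ range N, ‖(E (n+1) - E n) * c n‖^2 ≤ 4 * t^2 * T' := by
    intro N
    have hstep : ∑ n ∈ range N, ‖(E (n+1) - E n) * c n‖^2
        ≤ ∑ n ∈ range (N+1), ‖(E (n+1) - E n) * c n‖^2 := by
      apply Finset.sum_le_sum_of_subset_of_nonneg
      · exact Finset.range_subset_range.2 (Nat.le_succ N)
      · intro i _ _; positivity
    have h0 : ‖(E 1 - E 0) * c 0‖^2 = 0 := by rw [hc0]; simp
    rw [Finset.sum_range_succ' (fun n => ‖(E (n+1) - E n) * c n‖^2) N, h0, add_zero] at hstep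
    have hmid : ∑ m ∈ range N, ‖(E (m+1+1) - E (m+1)) * c (m+1)‖^2
        ≤ t^2 * ∑ m ∈ range N, ((∑ k ∈ range (m+1), a k) / (m+1))^2 := by
      rw [Finset.mul_sum]
      exact Finset.sum_le_sum fun m _ => hg m
    have hhardy := hardy a ha0 N
    calc ∑ n ∈ range N, ‖(E (n+1) - E n) * c n‖^2
        ≤ ∑ m ∈ range N, ‖(E (m+1+1) - E (m+1)) * c (m+1)‖^2 := hstep
      _ ≤ t^2 * ∑ m ∈ range N, ((∑ k ∈ range (m+1), a k) / (m+1))^2 := hmid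
      _ ≤ t^2 * (4 * ∑ n ∈ range N, (a n)^2) := by
          apply mul_le_mul_of_nonneg_left hhardy (sq_nonneg t)
      _ ≤ 4 * t^2 * T' := by
          have := hle_tsum N
          nlinarith [sq_nonneg t]
  -- total partial-sum bound
  have htotal : ∀ N : ℕ, ∑ n ∈ range N, (D n)^2 ≤ (2 + 8 * t^2) * T' := by
    intro N
    calc ∑ n ∈ range N, (D n)^2
        ≤ ∑ n ∈ range N, (2 * (a n)^2 + 2 * ‖(E (n+1) - E n) * c n‖^2) :=
          Finset.sum_le_sum fun n _ => hpt n
      _ = 2 * ∑ n ∈ range N, (a n)^2 + 2 * ∑ n ∈ range N, ‖(E (n+1) - E n) * c n‖^2 := by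
          rw [Finset.sum_add_distrib, Finset.mul_sum, Finset.mul_sum]
      _ ≤ 2 * T' + 2 * (4 * t^2 * T') := by
          have h1 := hle_tsum N
          have h2 := hgsum N
          linarith
      _ = (2 + 8 * t^2) * T' := by ring
  have hDsummable : Summable (fun n => (D n)^2) := by
    apply summable_of_sum_range_le (c := (2 + 8 * t^2) * T') (fun n => sq_nonneg _) htotal
  have hgoal_eq : (fun n : ℕ =>
      ‖Complex.exp (Complex.I * t * Real.log ((n:ℝ) + 1)) * c (n + 1) -
        Complex.exp (Complex.I * t * Real.log (n:ℝ)) * c n‖ ^ 2) = fun n => (D n)^2 := by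
    funext n
    have hcast : ((n:ℝ) + 1) = (((n+1 : ℕ)) : ℝ) := by push_cast; ring
    rw [hcast]
  constructor
  · exact hgoal_eq ▸ hDsummable
  · calc (∑' n : ℕ,
        ‖Complex.exp (Complex.I * t * Real.log ((n:ℝ) + 1)) * c (n + 1) -
          Complex.exp (Complex.I * t * Real.log (n:ℝ)) * c n‖ ^ 2)
        = ∑' n : ℕ, (D n)^2 := by rw [hgoal_eq]
      _ ≤ (2 + 8 * t^2) * T' := Real.tsum_le_of_sum_range_le (fun n => sq_nonneg _) htotal
end

section
/- The lower triangular infinite matrix whose n-th row has entries 1/√n in columns 1 through n and 0 elsewhere does not define a bounded operator on ℓ²; i.e., there is no constant C such that ∑_{n=1}^∞ (1/n)|∑_{j=1}^n a_j|² ≤ C ∑_{n=1}^∞ |a_n|² for all (a_n) ∈ ℓ². -/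
open Finset

/-- The lower triangular matrix with entries `1/√n` in row `n`, columns `1..n`,
is not bounded on `ℓ²`: there is no constant `C` such that for every `a ∈ ℓ²`
the sequence `((1/√n) ∑_{j=1}^n a_j)` is in `ℓ²` with
`∑ (1/n)|∑_{j=1}^n a_j|² ≤ C ∑ |a_n|²`. -/
theorem cesaro_sqrt_matrix_unbounded_on_l2 :
    ¬ ∃ C : ℝ, ∀ a : ℕ → ℂ, Summable (fun n => ‖a n‖ ^ 2) →
      Summable (fun n : ℕ =>
        (1 / (n + 1 : ℝ)) * ‖∑ j ∈ Finset.range (n + 1), a j‖ ^ 2) ∧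
      (∑' n : ℕ, (1 / (n + 1 : ℝ)) * ‖∑ j ∈ Finset.range (n + 1), a j‖ ^ 2)
        ≤ C * ∑' n : ℕ, ‖a n‖ ^ 2 := by
  rintro ⟨C, h⟩
  set a : ℕ → ℂ := fun n => (((n : ℂ) + 1))⁻¹ with ha
  have hsum : Summable (fun n => ‖a n‖ ^ 2) := by
    have h1 : Summable (fun n : ℕ => 1 / ((n : ℝ) + 1) ^ 2) := by
      have := (summable_nat_add_iff 1).mpr
        (Real.summable_one_div_nat_pow.mpr (le_refl 2))
      simpa using this
    refine h1.congr fun n => ?_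
    have hn : ‖a n‖ = ((n : ℝ) + 1)⁻¹ := by
      simp only [ha]
      rw [show ((n : ℂ) + 1) = ((n + 1 : ℝ) : ℂ) by push_cast; ring, norm_inv,
        Complex.norm_real, Real.norm_eq_abs, abs_of_nonneg (by positivity)]
    rw [hn, one_div, inv_pow]
  obtain ⟨hS, _⟩ := h a hsum
  have hle : ∀ n : ℕ, (1 : ℝ) / (n + 1) ≤
      (1 / (n + 1 : ℝ)) * ‖∑ j ∈ Finset.range (n + 1), a j‖ ^ 2 := by
    intro n
    have hsumeq : (∑ j ∈ Finset.range (n + 1), a j) =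
        ((∑ j ∈ Finset.range (n + 1), ((j : ℝ) + 1)⁻¹ : ℝ) : ℂ) := by
      push_cast
      rfl
    have h1 : (1 : ℝ) ≤ ∑ j ∈ Finset.range (n + 1), ((j : ℝ) + 1)⁻¹ := by
      have := Finset.single_le_sum (f := fun j : ℕ => ((j : ℝ) + 1)⁻¹)
        (fun i _ => by positivity) (Finset.mem_range.mpr (Nat.succ_pos n))
      simpa using this
    have hnorm : (1 : ℝ) ≤ ‖∑ j ∈ Finset.range (n + 1), a j‖ := by
      rw [hsumeq, Complex.norm_real, Real.norm_eq_abs,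
        abs_of_nonneg (by linarith)]
      exact h1
    have hpos : (0 : ℝ) < 1 / ((n : ℝ) + 1) := by positivity
    have h2 : (1 : ℝ) ≤ ‖∑ j ∈ Finset.range (n + 1), a j‖ ^ 2 := by
      nlinarith [hnorm]
    calc (1 : ℝ) / (n + 1) = 1 / ((n : ℝ) + 1) * 1 := by ring
      _ ≤ _ := by gcongr
  have hharm : Summable (fun n : ℕ => (1 : ℝ) / (n + 1)) :=
    Summable.of_nonneg_of_le (fun n => by positivity) hle hS
  have hfin : Summable (fun n : ℕ => (1 : ℝ) / n) :=
    (summable_nat_add_iff 1).mp (hharm.congr fun n => by push_cast; ring)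
  exact Real.not_summable_one_div_natCast hfin
end

section
/- For p ≥ 1, the lower triangular infinite matrix whose n-th row has entries n^{1/p − 1} in columns 1 through n does not define a bounded operator on ℓ^p; i.e., there is no constant C with ∑_{n=1}^∞ n^{1−p}|∑_{j=1}^n a_j|^p ≤ C ∑_{n=1}^∞ |a_n|^p for all (a_n) ∈ ℓ^p. -/
open Finset

/-- For `p ≥ 1`, the lower triangular matrix with entries `n^{1/p - 1}` in row
`n`, columns `1..n`, is not bounded on `ℓᵖ`: there is no constant `C` with
`∑ n^{1-p} |∑_{j=1}^n a_j|ᵖ ≤ C ∑ |a_n|ᵖ` for all `a ∈ ℓᵖ`. -/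
theorem cesaro_type_matrix_unbounded_on_lp (p : ℝ) (hp : 1 ≤ p) :
    ¬ ∃ C : ℝ, ∀ a : ℕ → ℂ, Summable (fun n => ‖a n‖ ^ p) →
      Summable (fun n : ℕ =>
        ((n + 1 : ℝ)) ^ (1 - p) * ‖∑ j ∈ Finset.range (n + 1), a j‖ ^ p) ∧
      (∑' n : ℕ, ((n + 1 : ℝ)) ^ (1 - p) * ‖∑ j ∈ Finset.range (n + 1), a j‖ ^ p)
        ≤ C * ∑' n : ℕ, ‖a n‖ ^ p := by
  rintro ⟨C, hC⟩
  obtain ⟨N, hN⟩ := exists_nat_gt (max 1 (C * 2 ^ (p - 1)))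
  have hN1 : (1 : ℝ) < N := lt_of_le_of_lt (le_max_left _ _) hN
  have hNpos : (0 : ℝ) < N := by linarith
  have hN0 : 0 < N := Nat.cast_pos.mp hNpos
  have hNC : C * 2 ^ (p - 1) < N := lt_of_le_of_lt (le_max_right _ _) hN
  have hp0 : p ≠ 0 := by linarith
  set a : ℕ → ℂ := fun n => if n < N then 1 else 0 with ha
  have hnorm : ∀ n, ‖a n‖ ^ p = if n < N then 1 else 0 := by
    intro n
    by_cases h : n < N <;> simp [ha, h, Real.one_rpow, Real.zero_rpow hp0]
  have hvanish : ∀ n ∉ Finset.range N, ‖a n‖ ^ p = 0 := by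
    intro n hn
    rw [hnorm n, if_neg (by simpa using hn)]
  have hsummable : Summable (fun n => ‖a n‖ ^ p) :=
    summable_of_ne_finset_zero (s := Finset.range N) hvanish
  have htsum : (∑' n, ‖a n‖ ^ p) = N := by
    rw [tsum_eq_sum hvanish]
    rw [Finset.sum_congr rfl (fun j hj => by rw [hnorm j, if_pos (Finset.mem_range.mp hj)])]
    simp
  have hpartial : ∀ n, N ≤ n + 1 → (∑ j ∈ Finset.range (n + 1), a j) = (N : ℂ) := by
    intro n hn
    have h1 : (∑ j ∈ Finset.range N, a j) = ∑ j ∈ Finset.range (n + 1), a j := by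
      apply Finset.sum_subset (Finset.range_subset_range.mpr hn)
      intro x _ hx
      simp only [ha, if_neg (Nat.not_lt.mpr (by simpa using hx))]
    rw [← h1]
    rw [Finset.sum_congr rfl (fun j hj => if_pos (Finset.mem_range.mp hj))]
    simp
  obtain ⟨hsum2, hle⟩ := hC a hsummable
  have hterm : ∀ n ∈ Finset.Ico N (2 * N),
      2 ^ (1 - p) * N ≤ ((n + 1 : ℝ)) ^ (1 - p) * ‖∑ j ∈ Finset.range (n + 1), a j‖ ^ p := by
    intro n hn
    obtain ⟨h1, h2⟩ := Finset.mem_Ico.mp hn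
    rw [hpartial n (by omega)]
    have hnormN : ‖(N : ℂ)‖ = (N : ℝ) := by simp
    rw [hnormN]
    have hb : ((2 * N : ℝ)) ^ (1 - p) ≤ ((n + 1 : ℝ)) ^ (1 - p) := by
      apply Real.rpow_le_rpow_of_nonpos (by positivity) ?_ (by linarith)
      have : (n : ℝ) + 1 ≤ 2 * N := by exact_mod_cast (by omega : n + 1 ≤ 2 * N)
      linarith
    calc 2 ^ (1 - p) * (N : ℝ)
        = (2 * N : ℝ) ^ (1 - p) * (N : ℝ) ^ p := by
          rw [Real.mul_rpow (by norm_num) hNpos.le, mul_assoc,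
            ← Real.rpow_add hNpos, sub_add_cancel, Real.rpow_one]
      _ ≤ ((n + 1 : ℝ)) ^ (1 - p) * (N : ℝ) ^ p :=
          mul_le_mul_of_nonneg_right hb (Real.rpow_nonneg hNpos.le p)
  have hlb : (N : ℝ) * (2 ^ (1 - p) * N) ≤
      ∑ n ∈ Finset.Ico N (2 * N), ((n + 1 : ℝ)) ^ (1 - p) * ‖∑ j ∈ Finset.range (n + 1), a j‖ ^ p := by
    have h1 : (N : ℝ) * (2 ^ (1 - p) * N) =
        ∑ _n ∈ Finset.Ico N (2 * N), (2 : ℝ) ^ (1 - p) * N := by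
      rw [Finset.sum_const, Nat.card_Ico]
      have h2 : 2 * N - N = N := by omega
      rw [h2, nsmul_eq_mul]
    rw [h1]
    exact Finset.sum_le_sum hterm
  have hup : (∑ n ∈ Finset.Ico N (2 * N),
      ((n + 1 : ℝ)) ^ (1 - p) * ‖∑ j ∈ Finset.range (n + 1), a j‖ ^ p) ≤ C * N := by
    calc _ ≤ ∑' n : ℕ, ((n + 1 : ℝ)) ^ (1 - p) * ‖∑ j ∈ Finset.range (n + 1), a j‖ ^ p :=
          Summable.sum_le_tsum _ (fun i _ => by positivity) hsum2
      _ ≤ C * ∑' n, ‖a n‖ ^ p := hle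
      _ = C * N := by rw [htsum]
  have key : (N : ℝ) * (2 ^ (1 - p) * N) ≤ C * N := hlb.trans hup
  have h2p : (2 : ℝ) ^ (1 - p) * 2 ^ (p - 1) = 1 := by
    rw [← Real.rpow_add (by norm_num)]
    norm_num
  have h2pos : (0 : ℝ) < 2 ^ (p - 1) := Real.rpow_pos_of_pos (by norm_num) _
  have hstep : 2 ^ (1 - p) * (N : ℝ) ≤ C := by
    have := (mul_le_mul_iff_left₀ hNpos).mp (by linarith [key] : (2 ^ (1 - p) * (N:ℝ)) * N ≤ C * N)
    exact this
  nlinarith [mul_le_mul_of_nonneg_left hstep h2pos.le]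
end

section
/- Let (e_n) be an orthonormal basis of a Hilbert space H, T the right shift (T e_n = e_{n+1}), k ∈ ℕ, and φ_n = (I − T)^k e_n. Then the closed linear span of (φ_n)_{n≥1} is all of H. -/
open scoped InnerProductSpace

private lemma basis_eq_zero_of_forall_inner
    {H : Type*} [NormedAddCommGroup H] [InnerProductSpace ℂ H] [CompleteSpace H]
    (b : HilbertBasis ℕ ℂ H) {y : H} (h : ∀ n, ⟪b n, y⟫_ℂ = 0) : y = 0 := by
  apply b.repr.injective
  rw [map_zero]
  ext n
  simp [b.repr_apply_apply, h n]

/-- If `T` is the right shift associated to an orthonormal basis `(e_n)` of a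
Hilbert space `H` and `k ∈ ℕ`, then the family `φ_n = (I - T)^k e_n` has dense
linear span in `H`. -/
theorem phi_family_complete
    {H : Type*} [NormedAddCommGroup H] [InnerProductSpace ℂ H] [CompleteSpace H]
    (b : HilbertBasis ℕ ℂ H) (T : H →L[ℂ] H) (hT : ∀ n : ℕ, T (b n) = b (n + 1))
    (k : ℕ) :
    Dense (Submodule.span ℂ
      (Set.range fun n : ℕ => ((1 - T : H →L[ℂ] H) ^ k) (b n)) : Set H) := by
  set S : H →L[ℂ] H := ContinuousLinearMap.adjoint T with hS
  -- (1 - S) has trivial kernel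
  have hker : ∀ y : H, (1 - S) y = 0 → y = 0 := by
    intro y hy
    have hy' : S y = y := by
      have := sub_eq_zero.mp (by simpa [ContinuousLinearMap.sub_apply] using hy)
      simpa using this.symm
    set c : ℕ → ℂ := fun n => ⟪b n, y⟫_ℂ with hc
    have hstep : ∀ n, c (n + 1) = c n := by
      intro n
      calc c (n + 1) = ⟪T (b n), y⟫_ℂ := by rw [hc, hT n]
        _ = ⟪b n, S y⟫_ℂ := (ContinuousLinearMap.adjoint_inner_right T _ _).symm
        _ = c n := by rw [hy']
    have hconst : ∀ n, c n = c 0 := by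
      intro n; induction n with
      | zero => rfl
      | succ m ih => rw [hstep m, ih]
    have hsum : Summable fun n => ‖c n‖ ^ 2 := b.orthonormal.inner_products_summable y
    have h0 : ‖c 0‖ ^ 2 = 0 := by
      have h1 : Filter.Tendsto (fun n => ‖c n‖ ^ 2) Filter.atTop (nhds 0) :=
        hsum.tendsto_atTop_zero
      have h2 : Filter.Tendsto (fun _ : ℕ => ‖c 0‖ ^ 2) Filter.atTop (nhds (‖c 0‖ ^ 2)) :=
        tendsto_const_nhds
      have : (fun n => ‖c n‖ ^ 2) = fun _ : ℕ => ‖c 0‖ ^ 2 := by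
        funext n; rw [hconst n]
      rw [this] at h1
      exact tendsto_nhds_unique h2 h1
    have hc0 : c 0 = 0 := by
      have := pow_eq_zero_iff (n := 2) (by norm_num) |>.mp h0
      simpa using this
    exact basis_eq_zero_of_forall_inner b fun n => (hconst n).trans hc0
  have hinj : Function.Injective ((1 - S : H →L[ℂ] H) : H → H) := by
    intro a a' hab
    have : (1 - S) (a - a') = 0 := by rw [map_sub, hab, sub_self]
    exact sub_eq_zero.mp (hker _ this)
  have hinjk : ∀ m : ℕ, Function.Injective (⇑((1 - S : H →L[ℂ] H) ^ m)) := by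
    intro m; induction m with
    | zero => simpa using Function.injective_id
    | succ m ih =>
      intro a a' hab
      rw [pow_succ, ContinuousLinearMap.mul_apply, ContinuousLinearMap.mul_apply] at hab
      exact hinj (ih hab)
  rw [Submodule.dense_iff_topologicalClosure_eq_top, Submodule.topologicalClosure_eq_top_iff,
    Submodule.eq_bot_iff]
  intro x hx
  have hx' : ∀ n : ℕ, ⟪((1 - T : H →L[ℂ] H) ^ k) (b n), x⟫_ℂ = 0 := fun n =>
    (Submodule.mem_orthogonal _ x).1 hx _ (Submodule.subset_span ⟨n, rfl⟩)
  have hadj : ContinuousLinearMap.adjoint ((1 - T : H →L[ℂ] H) ^ k) = (1 - S) ^ k := by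
    rw [← ContinuousLinearMap.star_eq_adjoint, star_pow, star_sub, star_one,
      ContinuousLinearMap.star_eq_adjoint]
  have key : ∀ n : ℕ, ⟪b n, ((1 - S : H →L[ℂ] H) ^ k) x⟫_ℂ = 0 := by
    intro n
    rw [← hadj, ContinuousLinearMap.adjoint_inner_right]
    exact hx' n
  have hzero : ((1 - S : H →L[ℂ] H) ^ k) x = 0 := basis_eq_zero_of_forall_inner b key
  exact hinjk k (by rw [map_zero]; exact hzero)
end

section
/- Let (e_n) be an orthonormal basis of a Hilbert space H, T the right shift, k ∈ ℕ, φ_n = (I − T)^k e_n, and ψ_n = ∑_{j₁=1}^{n} ∑_{j₂=1}^{j₁} ⋯ ∑_{j_k=1}^{j_{k−1}} e_{j_k} (iterated partial sums of the basis). Then ⟨ψ_n, φ_m⟩ = δ_{nm} for all n, m, i.e., (ψ_n) is biorthogonal to (φ_n). -/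
open Finset

/-- The `k`-fold iterated-partial-sum family `ψ_n` is biorthogonal to the family
`φ_n = (I - T)^k e_n`, where `T` is the right shift associated to an orthonormal
basis `(e_n)` of a Hilbert space `H`: `⟪ψ_n, φ_m⟫ = δ_{nm}`. -/
theorem psi_biorthogonal_to_phi
    {H : Type*} [NormedAddCommGroup H] [InnerProductSpace ℂ H] [CompleteSpace H]
    (b : HilbertBasis ℕ ℂ H) (T : H →L[ℂ] H) (hT : ∀ n : ℕ, T (b n) = b (n + 1))
    (k : ℕ) :
    ∀ n m : ℕ,
      (inner ℂ
        (((fun f : ℕ → H => fun n => ∑ j ∈ Finset.range (n + 1), f j)^[k]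
            (fun j : ℕ => b j)) n)
        (((1 - T : H →L[ℂ] H) ^ k) (b m)) : ℂ)
        = if n = m then 1 else 0 := by
  induction k with
  | zero =>
    intro n m
    simpa using orthonormal_iff_ite.mp b.orthonormal n m
  | succ k ih =>
    intro n m
    have hiter : ((fun f : ℕ → H => fun n => ∑ j ∈ Finset.range (n + 1), f j)^[k + 1]
        (fun j : ℕ => b j)) n = ∑ j ∈ Finset.range (n + 1),
          ((fun f : ℕ → H => fun n => ∑ j ∈ Finset.range (n + 1), f j)^[k]
            (fun j : ℕ => b j)) j := by
      rw [Function.iterate_succ']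
      rfl
    have hpow : ((1 - T : H →L[ℂ] H) ^ (k + 1)) (b m)
        = ((1 - T : H →L[ℂ] H) ^ k) (b m) - ((1 - T : H →L[ℂ] H) ^ k) (b (m + 1)) := by
      rw [pow_succ, ContinuousLinearMap.mul_apply, ContinuousLinearMap.sub_apply,
        ContinuousLinearMap.one_apply, hT, map_sub]
    rw [hiter, hpow, sum_inner]
    simp only [inner_sub_right, ih]
    rw [Finset.sum_sub_distrib, Finset.sum_ite_eq', Finset.sum_ite_eq']
    simp only [Finset.mem_range]
    split_ifs <;> norm_num <;> omega
end

section
/- Let (e_n) be an orthonormal basis of a Hilbert space H, and let x = ∑_{n=1}^∞ e_n/n ∈ H. Then the inner products of x with the biorthogonal vectors ψ_n = ∑_{j=1}^n e_j satisfy ⟨x, ψ_n⟩ = ∑_{j=1}^n 1/j → ∞ as n → ∞, while any Schauder basis expansion would require these coefficients to be bounded; hence the family φ_n = e_n − e_{n+1} is not a Schauder basis of H. -/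
open Finset

/-- Let `x = ∑ e_n / n` (with `(e_n)` an orthonormal basis of `H`). The inner
products with the biorthogonal vectors `ψ_n = ∑_{j=1}^n e_j` are the harmonic
sums `∑_{j=1}^n 1/j`, which tend to `∞`; consequently `φ_n = e_n - e_{n+1}`
is not a Schauder basis of `H`. -/
theorem harmonic_coefficients_unbounded_and_phi_not_basis
    {H : Type*} [NormedAddCommGroup H] [InnerProductSpace ℂ H] [CompleteSpace H]
    (b : HilbertBasis ℕ ℂ H) :
    (∀ n : ℕ,
      (inner ℂ (∑' m : ℕ, ((m : ℂ) + 1)⁻¹ • b m)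
        (∑ j ∈ Finset.range (n + 1), b j) : ℂ)
        = ∑ j ∈ Finset.range (n + 1), ((j : ℂ) + 1)⁻¹) ∧
    Filter.Tendsto (fun n : ℕ =>
        ‖(inner ℂ (∑' m : ℕ, ((m : ℂ) + 1)⁻¹ • b m)
            (∑ j ∈ Finset.range (n + 1), b j) : ℂ)‖)
      Filter.atTop Filter.atTop ∧
    ¬ ∃ f : ℕ → (H →L[ℂ] ℂ), ∀ x : H,
        HasSum (fun n : ℕ => f n x • (b n - b (n + 1))) x := by
  classical
  have hmem : Memℓp (fun m : ℕ => ((m : ℂ) + 1)⁻¹) 2 := by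
    apply memℓp_gen
    have h2 : ((2:ENNReal)).toReal = (2:ℝ) := by norm_num
    rw [h2]
    have hs : Summable (fun m : ℕ => (1 : ℝ) / ((m:ℝ) + 1) ^ 2) := by
      have := Real.summable_one_div_nat_pow.mpr (by norm_num : 1 < 2)
      exact_mod_cast (summable_nat_add_iff 1).mpr this
    convert hs using 2 with m
    rw [norm_inv, show ((m:ℂ)+1) = ((m+1 : ℕ) : ℂ) by push_cast; ring, Complex.norm_natCast]
    rw [Real.rpow_two]
    push_cast
    rw [inv_pow, one_div]
  set c : lp (fun _ : ℕ => ℂ) 2 := ⟨fun m => ((m : ℂ) + 1)⁻¹, hmem⟩ with hc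
  have hx' : HasSum (fun m : ℕ => ((m : ℂ) + 1)⁻¹ • b m) (b.repr.symm c) := by
    have := b.hasSum_repr_symm c
    convert this using 2
  set x₀ : H := ∑' m : ℕ, ((m : ℂ) + 1)⁻¹ • b m with hx₀
  have hx : HasSum (fun m : ℕ => ((m : ℂ) + 1)⁻¹ • b m) x₀ := by
    rw [hx₀, hx'.tsum_eq]; exact hx'
  have hbo : ∀ i j : ℕ, (inner ℂ (b i) (b j) : ℂ) = if i = j then 1 else 0 :=
    orthonormal_iff_ite.mp b.orthonormal
  -- ⟪b j, x₀⟫ = (j+1)⁻¹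
  have coef : ∀ j : ℕ, (inner ℂ (b j) x₀ : ℂ) = ((j : ℂ) + 1)⁻¹ := by
    intro j
    have h1 := hx.mapL (innerSL ℂ (b j))
    have h2 : (fun m : ℕ => (innerSL ℂ (b j)) (((m : ℂ) + 1)⁻¹ • b m))
        = fun m : ℕ => if m = j then ((j : ℂ) + 1)⁻¹ else 0 := by
      funext m
      simp only [innerSL_apply_apply, inner_smul_right, hbo j m]
      by_cases h : m = j
      · subst h; simp
      · simp [h, Ne.symm h]
    rw [h2] at h1
    have h3 : HasSum (fun m : ℕ => if m = j then ((j : ℂ) + 1)⁻¹ else 0)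
        (((j : ℂ) + 1)⁻¹) := hasSum_ite_eq j _
    exact (h3.unique h1).symm
  -- Part 1
  have part1 : ∀ n : ℕ, (inner ℂ x₀ (∑ j ∈ Finset.range (n + 1), b j) : ℂ)
      = ∑ j ∈ Finset.range (n + 1), ((j : ℂ) + 1)⁻¹ := by
    intro n
    rw [inner_sum]
    refine Finset.sum_congr rfl fun j _ => ?_
    rw [← inner_conj_symm, coef j]
    rw [show ((j:ℂ)+1) = ((j+1 : ℕ) : ℂ) by push_cast; ring]
    simp [map_inv₀]
  -- real-valued harmonic sums
  have hval : ∀ n : ℕ, (∑ j ∈ Finset.range (n + 1), ((j : ℂ) + 1)⁻¹)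
      = ((∑ j ∈ Finset.range (n + 1), ((j : ℝ) + 1)⁻¹ : ℝ) : ℂ) := by
    intro n
    push_cast
    exact Finset.sum_congr rfl fun j _ => by ring
  have hharm_ge : ∀ n : ℕ, (1:ℝ) ≤ ∑ j ∈ Finset.range (n + 1), ((j : ℝ) + 1)⁻¹ := by
    intro n
    induction n with
    | zero => simp
    | succ k ih =>
      rw [Finset.sum_range_succ]
      have h2 : (0:ℝ) ≤ (((k+1 : ℕ) : ℝ) + 1)⁻¹ := by positivity
      linarith
  have hnorm : ∀ n : ℕ, ‖(∑ j ∈ Finset.range (n + 1), ((j : ℂ) + 1)⁻¹)‖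
      = ∑ j ∈ Finset.range (n + 1), ((j : ℝ) + 1)⁻¹ := by
    intro n
    rw [hval n, Complex.norm_real, Real.norm_eq_abs, abs_of_nonneg]
    linarith [hharm_ge n]
  -- Part 2
  have part2 : Filter.Tendsto (fun n : ℕ =>
      ‖(inner ℂ x₀ (∑ j ∈ Finset.range (n + 1), b j) : ℂ)‖)
      Filter.atTop Filter.atTop := by
    have heq : (fun n : ℕ => ‖(inner ℂ x₀ (∑ j ∈ Finset.range (n + 1), b j) : ℂ)‖)
        = fun n : ℕ => ∑ j ∈ Finset.range (n + 1), ((j : ℝ) + 1)⁻¹ := by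
      funext n; rw [part1 n, hnorm n]
    rw [heq]
    have hcomp := Real.tendsto_sum_range_one_div_nat_succ_atTop.comp
      (Filter.tendsto_add_atTop_nat 1)
    have heq2 : (fun n : ℕ => ∑ j ∈ Finset.range (n + 1), ((j : ℝ) + 1)⁻¹)
        = (fun n : ℕ => ∑ i ∈ Finset.range n, 1 / ((i : ℝ) + 1)) ∘ (fun n => n + 1) := by
      funext n
      simp only [Function.comp]
      exact Finset.sum_congr rfl fun j _ => by rw [one_div]
    rw [heq2]
    exact hcomp
  refine ⟨part1, part2, ?_⟩
  -- Part 3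
  rintro ⟨f, hf⟩
  have h := hf x₀
  set a : ℕ → ℂ := fun n => f n x₀ with ha
  -- compute a via biorthogonality
  have key : ∀ j : ℕ, a j = ∑ k ∈ Finset.range (j + 1), ((k : ℂ) + 1)⁻¹ := by
    intro j
    induction j with
    | zero =>
      have h1 := h.mapL (innerSL ℂ (b 0))
      have h2 : (fun n : ℕ => (innerSL ℂ (b 0)) (a n • (b n - b (n+1))))
          = fun n : ℕ => if n = 0 then a 0 else 0 := by
        funext n
        simp only [innerSL_apply_apply, inner_smul_right, inner_sub_right, hbo 0 n, hbo 0 (n+1)]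
        by_cases hn : n = 0
        · subst hn; simp
        · simp [hn, Ne.symm hn]
      rw [h2] at h1
      have h3 : HasSum (fun n : ℕ => if n = 0 then a 0 else 0) (a 0) := hasSum_ite_eq 0 _
      have h4 := h3.unique h1
      rw [h4, innerSL_apply_apply, coef 0]
      simp
    | succ k ih =>
      have h1 := h.mapL (innerSL ℂ (b (k+1)))
      have h2 : (fun n : ℕ => (innerSL ℂ (b (k+1))) (a n • (b n - b (n+1))))
          = (fun n : ℕ => if n = k+1 then a (k+1) else 0)
            + fun n : ℕ => if n = k then -a k else 0 := by
        funext n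
        simp only [Pi.add_apply, innerSL_apply_apply, inner_smul_right, inner_sub_right,
          hbo (k+1) n, hbo (k+1) (n+1)]
        by_cases hn : n = k+1
        · subst hn
          have e1 : ¬ (k + 1 = k + 1 + 1) := by omega
          have e2 : ¬ (k + 1 = k) := by omega
          simp only [if_pos rfl, if_neg e1, if_neg e2, if_true, mul_one]
          ring
        · by_cases hn' : n = k
          · have e1 : ¬ (k + 1 = k) := by omega
            have e2 : ¬ (k = k + 1) := by omega
            rw [hn']
            simp only [if_neg e1, if_pos rfl, if_neg e2, if_true, mul_one]
            ring
          · have e1 : ¬ (k + 1 = n) := by omega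
            have e2 : ¬ (k + 1 = n + 1) := by omega
            simp only [if_neg e1, if_neg e2, if_neg hn, if_neg hn']
            ring
      rw [h2] at h1
      have h3 : HasSum ((fun n : ℕ => if n = k+1 then a (k+1) else 0)
          + fun n : ℕ => if n = k then -a k else 0) (a (k+1) + -a k) :=
        (hasSum_ite_eq (k+1) _).add (hasSum_ite_eq k _)
      have h4 := h3.unique h1
      simp only [innerSL_apply_apply] at h4
      rw [coef (k+1)] at h4
      have h5 : a (k+1) = a k + (((k+1 : ℕ) : ℂ) + 1)⁻¹ := by
        push_cast at h4 ⊢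
        linear_combination h4
      rw [Finset.sum_range_succ, ← ih, h5]
  -- terms of a convergent series tend to 0
  have hzero : Filter.Tendsto (fun n : ℕ => a n • (b n - b (n+1))) Filter.atTop (nhds 0) :=
    h.summable.tendsto_atTop_zero
  -- but each term has norm ≥ 1
  have hnormφ : ∀ n : ℕ, (1:ℝ) ≤ ‖b n - b (n+1)‖ := by
    intro n
    have hinner : (inner ℂ (b n) (b (n+1)) : ℂ) = 0 := by
      rw [hbo n (n+1)]; simp
    have hsq : ‖b n - b (n+1)‖ ^ 2 = 2 := by
      rw [@norm_sub_sq ℂ, hinner]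
      have h1 : ‖b n‖ = 1 := b.orthonormal.1 n
      have h2 : ‖b (n+1)‖ = 1 := b.orthonormal.1 (n+1)
      rw [h1, h2]; norm_num
    nlinarith [norm_nonneg (b n - b (n+1))]
  have hterm : ∀ n : ℕ, (1:ℝ) ≤ ‖a n • (b n - b (n+1))‖ := by
    intro n
    rw [norm_smul]
    have h1 : (1:ℝ) ≤ ‖a n‖ := by
      rw [key n, hval n, Complex.norm_real, Real.norm_eq_abs, abs_of_nonneg]
      · exact hharm_ge n
      · linarith [hharm_ge n]
    calc (1:ℝ) = 1 * 1 := by ring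
    _ ≤ ‖a n‖ * ‖b n - b (n+1)‖ :=
        mul_le_mul h1 (hnormφ n) (by norm_num) (le_trans (by norm_num) h1)
  have hzn := hzero.norm
  rw [norm_zero] at hzn
  have hev := hzn.eventually (eventually_lt_nhds (by norm_num : (0:ℝ) < 1))
  obtain ⟨n, hn⟩ := hev.exists
  exact absurd (hterm n) (not_le.mpr hn)
end
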